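/- Let μ, ν : Π → ℝ satisfy, on the rectangle Π = [0,h]×[0,v*], the integral inequalities |μ(u,v)| ≤ e^{vL̄}(m₀ + K̄∫₀ᵛ|ν(u,v')|dv') and |ν(u,v)| ≤ e^{uK̄}(1 + L̄∫₀ᵘ|μ(u',v)|du') for constants K̄, L̄ ≥ 0, m₀ ≥ 0. Then |ν(u,v)| ≤ F₁(u,v) and |μ(u,v)| ≤ F₂(u,v), where F₁(u,v) = f₁(u,v) + f₂(u,v)∫₀ᵛ f₁(u,v')e^{∫_{v'}^v f₂(u,v'')dv''}dv' with f₁(u,v) = e^{uK̄}(1 + uL̄e^{vL̄}M), f₂(u,v) = uK̄L̄e^{uK̄+vL̄}, F₂(u,v) = e^{vL̄}(m₀ + K̄∫₀ᵛF₁(u,v')dv'), and M is any bound with |μ| ≤ M; moreover F₁(u,v) → 1 as u → 0 and F₂(u,v) → m₀ as v → 0. -/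

import Mathlib

set_option maxHeartbeats 1000000


/-- f₁(u,v) = e^{uK̄}(1 + uL̄e^{vL̄}M). -/
noncomputable def fone (K L M u v : ℝ) : ℝ :=
  Real.exp (u * K) * (1 + u * L * Real.exp (v * L) * M)

/-- f₂(u,v) = uK̄L̄e^{uK̄+vL̄}. -/
noncomputable def ftwo (K L u v : ℝ) : ℝ :=
  u * K * L * Real.exp (u * K + v * L)

/-- F₁(u,v) = f₁(u,v) + f₂(u,v)∫₀ᵛ f₁(u,v')e^{∫_{v'}^v f₂(u,v'')dv''}dv'. -/
noncomputable def Fone (K L M u v : ℝ) : ℝ :=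
  fone K L M u v + ftwo K L u v *
    ∫ v' in (0:ℝ)..v, fone K L M u v' * Real.exp (∫ v'' in v'..v, ftwo K L u v'')

/-- F₂(u,v) = e^{vL̄}(m₀ + K̄∫₀ᵛ F₁(u,v')dv'). -/
noncomputable def Ftwo (K L M m₀ u v : ℝ) : ℝ :=
  Real.exp (v * L) * (m₀ + K * ∫ v' in (0:ℝ)..v, Fone K L M u v')

lemma cont_fone (K L M : ℝ) : Continuous fun p : ℝ × ℝ => fone K L M p.1 p.2 := by
  unfold fone; fun_prop

lemma cont_ftwo (K L : ℝ) : Continuous fun p : ℝ × ℝ => ftwo K L p.1 p.2 := by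
  unfold ftwo; fun_prop

lemma contG (K L : ℝ) :
    Continuous fun p : ℝ × ℝ => ∫ t in (0:ℝ)..p.2, ftwo K L p.1 t := by
  have hf : Continuous (Function.uncurry fun (p : ℝ × ℝ) (t : ℝ) => ftwo K L p.1 t) := by
    have : Continuous fun q : (ℝ × ℝ) × ℝ => ftwo K L q.1.1 q.2 := by unfold ftwo; fun_prop
    exact this
  exact intervalIntegral.continuous_parametric_intervalIntegral_of_continuous hf continuous_snd

lemma key (K L u v v' : ℝ) :
    (∫ v'' in v'..v, ftwo K L u v'') =
      (∫ t in (0:ℝ)..v, ftwo K L u t) - ∫ t in (0:ℝ)..v', ftwo K L u t := by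
  rw [intervalIntegral.integral_interval_sub_left]
  · exact (Continuous.intervalIntegrable (by unfold ftwo; fun_prop) _ _)
  · exact (Continuous.intervalIntegrable (by unfold ftwo; fun_prop) _ _)

lemma cont_Fone (K L M : ℝ) : Continuous fun p : ℝ × ℝ => Fone K L M p.1 p.2 := by
  have hg := contG K L
  have heq : ∀ p : ℝ × ℝ, Fone K L M p.1 p.2 = fone K L M p.1 p.2 + ftwo K L p.1 p.2 *
      ∫ v' in (0:ℝ)..p.2, fone K L M p.1 v' *
        Real.exp ((∫ t in (0:ℝ)..p.2, ftwo K L p.1 t) - ∫ t in (0:ℝ)..v', ftwo K L p.1 t) := by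
    intro p
    unfold Fone
    congr 1
    congr 1
    apply intervalIntegral.integral_congr
    intro x _
    beta_reduce
    rw [key K L p.1 p.2 x]
  simp only [heq]
  have hf : Continuous (Function.uncurry fun (p : ℝ × ℝ) (v' : ℝ) => fone K L M p.1 v' *
      Real.exp ((∫ t in (0:ℝ)..p.2, ftwo K L p.1 t) - ∫ t in (0:ℝ)..v', ftwo K L p.1 t)) := by
    have h1 : Continuous fun q : (ℝ × ℝ) × ℝ => fone K L M q.1.1 q.2 := by
      have := (cont_fone K L M).comp
        (show Continuous fun q : (ℝ × ℝ) × ℝ => (q.1.1, q.2) by fun_prop)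
      exact this
    have h2 : Continuous fun q : (ℝ × ℝ) × ℝ => ∫ t in (0:ℝ)..q.1.2, ftwo K L q.1.1 t :=
      hg.comp continuous_fst
    have h3 : Continuous fun q : (ℝ × ℝ) × ℝ => ∫ t in (0:ℝ)..q.2, ftwo K L q.1.1 t := by
      have := hg.comp (show Continuous fun q : (ℝ × ℝ) × ℝ => (q.1.1, q.2) by fun_prop)
      exact this
    exact h1.mul (Real.continuous_exp.comp (h2.sub h3))
  exact ((cont_fone K L M).add ((cont_ftwo K L).mul
    (intervalIntegral.continuous_parametric_intervalIntegral_of_continuous hf continuous_snd)))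

lemma fone_nonneg {K L M u v : ℝ} (hL : 0 ≤ L) (hM : 0 ≤ M) (hu : 0 ≤ u) :
    0 ≤ fone K L M u v := by
  unfold fone
  have h1 : 0 ≤ u * L * Real.exp (v * L) * M :=
    mul_nonneg (mul_nonneg (mul_nonneg hu hL) (Real.exp_nonneg _)) hM
  have h2 := Real.exp_nonneg (u * K)
  nlinarith

/-- two-dimensional coupled Gronwall estimate on Π = [0,h]×[0,v*]:
if |μ(u,v)| ≤ e^{vL̄}(m₀ + K̄∫₀ᵛ|ν(u,·)|), |ν(u,v)| ≤ e^{uK̄}(1 + L̄∫₀ᵘ|μ(·,v)|),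
and |μ| ≤ M, then |ν| ≤ F₁ and |μ| ≤ F₂; moreover F₁(u,v) → 1 as u → 0 and
F₂(u,v) → m₀ as v → 0. -/
theorem stmt12 (h vStar Kb Lb m₀ M : ℝ)
    (hh : 0 ≤ h) (hv : 0 ≤ vStar) (hK : 0 ≤ Kb) (hL : 0 ≤ Lb) (hm : 0 ≤ m₀)
    (μ ν : ℝ → ℝ → ℝ)
    (hcμ : ContinuousOn (fun p : ℝ × ℝ => μ p.1 p.2) (Set.Icc 0 h ×ˢ Set.Icc 0 vStar))
    (hcν : ContinuousOn (fun p : ℝ × ℝ => ν p.1 p.2) (Set.Icc 0 h ×ˢ Set.Icc 0 vStar))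
    (hM : ∀ u ∈ Set.Icc (0:ℝ) h, ∀ v ∈ Set.Icc (0:ℝ) vStar, |μ u v| ≤ M)
    (hμ : ∀ u ∈ Set.Icc (0:ℝ) h, ∀ v ∈ Set.Icc (0:ℝ) vStar,
      |μ u v| ≤ Real.exp (v * Lb) * (m₀ + Kb * ∫ v' in (0:ℝ)..v, |ν u v'|))
    (hν : ∀ u ∈ Set.Icc (0:ℝ) h, ∀ v ∈ Set.Icc (0:ℝ) vStar,
      |ν u v| ≤ Real.exp (u * Kb) * (1 + Lb * ∫ u' in (0:ℝ)..u, |μ u' v|)) :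
    (∀ u ∈ Set.Icc (0:ℝ) h, ∀ v ∈ Set.Icc (0:ℝ) vStar, |ν u v| ≤ Fone Kb Lb M u v) ∧
    (∀ u ∈ Set.Icc (0:ℝ) h, ∀ v ∈ Set.Icc (0:ℝ) vStar, |μ u v| ≤ Ftwo Kb Lb M m₀ u v) ∧
    (∀ v : ℝ, Filter.Tendsto (fun u => Fone Kb Lb M u v) (nhds 0) (nhds 1)) ∧
    (∀ u : ℝ, Filter.Tendsto (fun v => Ftwo Kb Lb M m₀ u v) (nhds 0) (nhds m₀)) := by
  have hM0 : (0:ℝ) ≤ M :=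
    le_trans (abs_nonneg _) (hM 0 ⟨le_refl 0, hh⟩ 0 ⟨le_refl 0, hv⟩)
  have part1 : ∀ u ∈ Set.Icc (0:ℝ) h, ∀ v ∈ Set.Icc (0:ℝ) vStar,
      |ν u v| ≤ Fone Kb Lb M u v := by
    intro u hu v hv'
    have hsl : ContinuousOn (fun u' => |μ u' v|) (Set.Icc (0:ℝ) h) := by
      have hc : ContinuousOn (fun u' => μ u' v) (Set.Icc (0:ℝ) h) := by
        have := hcμ.comp
          ((show Continuous fun u' : ℝ => ((u', v) : ℝ × ℝ) by fun_prop).continuousOn)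
          (fun x hx => Set.mk_mem_prod hx hv')
        exact this
      exact hc.abs
    have hintg : IntervalIntegrable (fun u' => |μ u' v|) MeasureTheory.volume 0 u := by
      apply ContinuousOn.intervalIntegrable
      apply hsl.mono
      rw [Set.uIcc_of_le hu.1]
      exact Set.Icc_subset_Icc le_rfl hu.2
    have hbound : (∫ u' in (0:ℝ)..u, |μ u' v|) ≤ u * M := by
      have := intervalIntegral.integral_mono_on hu.1 hintg intervalIntegrable_const
        (fun x hx => hM x ⟨hx.1, hx.2.trans hu.2⟩ v hv')
      simpa using this
    have hfle : Real.exp (u * Kb) * (1 + Lb * (u * M)) ≤ fone Kb Lb M u v := by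
      unfold fone
      have he : (1:ℝ) ≤ Real.exp (v * Lb) := Real.one_le_exp (mul_nonneg hv'.1 hL)
      have hexp := Real.exp_pos (u * Kb)
      nlinarith [mul_nonneg hexp.le (mul_nonneg (mul_nonneg (mul_nonneg hu.1 hL) hM0) (sub_nonneg.2 he))]
    have hFge : fone Kb Lb M u v ≤ Fone Kb Lb M u v := by
      unfold Fone
      have hft : 0 ≤ ftwo Kb Lb u v := by
        unfold ftwo
        exact mul_nonneg (mul_nonneg (mul_nonneg hu.1 hK) hL) (Real.exp_nonneg _)
      have hI : 0 ≤ ∫ v' in (0:ℝ)..v,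
          fone Kb Lb M u v' * Real.exp (∫ v'' in v'..v, ftwo Kb Lb u v'') := by
        apply intervalIntegral.integral_nonneg hv'.1
        intro x _
        exact mul_nonneg (fone_nonneg hL hM0 hu.1) (Real.exp_nonneg _)
      nlinarith [mul_nonneg hft hI]
    calc |ν u v| ≤ Real.exp (u * Kb) * (1 + Lb * ∫ u' in (0:ℝ)..u, |μ u' v|) :=
          hν u hu v hv'
      _ ≤ Real.exp (u * Kb) * (1 + Lb * (u * M)) := by gcongr <;> positivity
      _ ≤ fone Kb Lb M u v := hfle
      _ ≤ Fone Kb Lb M u v := hFge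
  refine ⟨part1, ?_, ?_, ?_⟩
  · intro u hu v hv'
    have hslν : IntervalIntegrable (fun v' => |ν u v'|) MeasureTheory.volume 0 v := by
      have hc : ContinuousOn (fun v' => ν u v') (Set.Icc (0:ℝ) vStar) := by
        have := hcν.comp
          ((show Continuous fun v' : ℝ => ((u, v') : ℝ × ℝ) by fun_prop).continuousOn)
          (fun x hx => Set.mk_mem_prod hu hx)
        exact this
      apply ContinuousOn.intervalIntegrable
      apply hc.abs.mono
      rw [Set.uIcc_of_le hv'.1]
      exact Set.Icc_subset_Icc le_rfl hv'.2
    have hcF : Continuous fun v' : ℝ => Fone Kb Lb M u v' := by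
      have := (cont_Fone Kb Lb M).comp
        (show Continuous fun v' : ℝ => ((u, v') : ℝ × ℝ) by fun_prop)
      exact this
    have hFint : IntervalIntegrable (fun v' => Fone Kb Lb M u v') MeasureTheory.volume 0 v :=
      hcF.intervalIntegrable _ _
    have hmono : (∫ v' in (0:ℝ)..v, |ν u v'|) ≤ ∫ v' in (0:ℝ)..v, Fone Kb Lb M u v' :=
      intervalIntegral.integral_mono_on hv'.1 hslν hFint
        (fun x hx => part1 u hu x ⟨hx.1, hx.2.trans hv'.2⟩)
    calc |μ u v| ≤ Real.exp (v * Lb) * (m₀ + Kb * ∫ v' in (0:ℝ)..v, |ν u v'|) :=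
          hμ u hu v hv'
      _ ≤ Ftwo Kb Lb M m₀ u v := by unfold Ftwo; gcongr <;> positivity
  · intro v
    have hc : Continuous fun u => Fone Kb Lb M u v := by
      have := (cont_Fone Kb Lb M).comp
        (show Continuous fun u : ℝ => ((u, v) : ℝ × ℝ) by fun_prop)
      exact this
    have h0 : Fone Kb Lb M 0 v = 1 := by simp [Fone, fone, ftwo]
    simpa [h0] using hc.tendsto 0
  · intro u
    have hcF : Continuous fun v' : ℝ => Fone Kb Lb M u v' := by
      have := (cont_Fone Kb Lb M).comp
        (show Continuous fun v' : ℝ => ((u, v') : ℝ × ℝ) by fun_prop)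
      exact this
    have hprim : Continuous fun v => ∫ v' in (0:ℝ)..v, Fone Kb Lb M u v' :=
      intervalIntegral.continuous_primitive (fun a b => hcF.intervalIntegrable a b) 0
    have hc : Continuous fun v => Ftwo Kb Lb M m₀ u v := by
      unfold Ftwo
      exact ((Real.continuous_exp.comp (by fun_prop : Continuous fun v : ℝ => v * Lb)).mul
        (continuous_const.add (continuous_const.mul hprim)))
    have h0 : Ftwo Kb Lb M m₀ u 0 = m₀ := by simp [Ftwo]
    simpa [h0] using hc.tendsto 0
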